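/- Let f : ℕ → ℝ be a nonnegative function with the property that for all r, s ∈ ℕ, if f(r) > 0 then f(r+s) ≥ f(s). Fix a real number k > 0 and define g : ℕ → [0,∞] by g(r) = limsup_{m→∞} f(m·r)/m^k (the limsup taken in the extended nonnegative reals). Then g(c·r) = c^k · g(r) for all positive integers c and r. -/

import Mathlib

open Filter

private lemma aux_iter (f : ℕ → ℝ)
    (h_super : ∀ r s : ℕ, 0 < f r → f s ≤ f (r + s))
    {a : ℕ} (ha : 0 < f a) (s : ℕ) : ∀ t : ℕ, f s ≤ f (t * a + s) := by
  intro t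
  induction t with
  | zero => simp
  | succ t ih =>
    calc f s ≤ f (t * a + s) := ih
    _ ≤ f (a + (t * a + s)) := h_super a (t * a + s) ha
    _ = f ((t + 1) * a + s) := by ring_nf

private lemma aux_pigeon {S : Set ℕ} (hS : S.Infinite) {c : ℕ} (hc : 0 < c) :
    ∃ ρ, {m ∈ S | m % c = ρ}.Infinite := by
  by_contra h
  push_neg at h
  have hsub : S ⊆ ⋃ ρ ∈ Finset.range c, {m ∈ S | m % c = ρ} := by
    intro m hm
    simp only [Set.mem_iUnion]
    exact ⟨m % c, Finset.mem_range.2 (Nat.mod_lt _ hc), hm, rfl⟩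
  exact hS ((Set.Finite.biUnion (Finset.range c).finite_toSet (fun ρ _ => h ρ)).subset hsub)

theorem limsup_homogeneous_of_superadditive
    (f : ℕ → ℝ) (h_nonneg : ∀ n, 0 ≤ f n)
    (h_super : ∀ r s : ℕ, 0 < f r → f s ≤ f (r + s))
    (k : ℝ) (hk : 0 < k)
    (g : ℕ → ENNReal)
    (hg : ∀ r : ℕ, g r =
      Filter.limsup (fun m : ℕ => ENNReal.ofReal (f (m * r) / (m : ℝ) ^ k)) Filter.atTop)
    (c r : ℕ) (hc : 0 < c) (hr : 0 < r) :
    g (c * r) = (c : ENNReal) ^ k * g r := by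
  obtain ⟨d, rfl⟩ : ∃ d, c = d + 1 := ⟨c - 1, by omega⟩
  set c := d + 1 with hcdef
  set u : ℕ → ENNReal := fun m => ENNReal.ofReal (f (m * r) / (m : ℝ) ^ k) with hu
  set v : ℕ → ENNReal := fun m => ENNReal.ofReal (f (m * (c * r)) / (m : ℝ) ^ k) with hv
  set A : ENNReal := ENNReal.ofReal ((c : ℝ) ^ k) with hAdef
  have hckpos : (0:ℝ) < (c : ℝ) ^ k := Real.rpow_pos_of_pos (by positivity) k
  have hA_ne_top : A ≠ ⊤ := ENNReal.ofReal_ne_top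
  have hA_ne_zero : A ≠ 0 := by
    simp only [hAdef, ne_eq, ENNReal.ofReal_eq_zero, not_le]; exact hckpos
  have hA : ((c : ENNReal)) ^ k = A := by
    rw [hAdef, ← ENNReal.ofReal_natCast c, ← ENNReal.ofReal_rpow_of_pos (by positivity)]
  rw [hg (c * r), hg r, hA, ← hu, ← hv]
  -- `≤` direction
  have hle : limsup v atTop ≤ A * limsup u atTop := by
    have hveq : v = fun m => A * u (c * m) := by
      funext m
      rcases Nat.eq_zero_or_pos m with hm | hm
      · subst hm
        simp only [hv, hu, Nat.cast_zero, Nat.zero_mul, Nat.mul_zero,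
          Real.zero_rpow hk.ne', div_zero, ENNReal.ofReal_zero, mul_zero]
      · have hmR : (0:ℝ) < (m : ℝ) := by exact_mod_cast hm
        simp only [hv, hu, hAdef]
        rw [← ENNReal.ofReal_mul hckpos.le]
        congr 1
        have h1 : m * (c * r) = (c * m) * r := by ring
        rw [h1]
        have h2 : ((c * m : ℕ) : ℝ) ^ k = (c:ℝ)^k * (m:ℝ)^k := by
          push_cast
          exact Real.mul_rpow (by positivity) hmR.le
        rw [h2]
        have hm1 : (m:ℝ) ^ k ≠ 0 := by positivity
        field_simp
    rw [hveq]
    rw [ENNReal.limsup_const_mul_of_ne_top hA_ne_top]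
    refine mul_le_mul_right ?_ A
    have hφ : Tendsto (fun m : ℕ => c * m) atTop atTop :=
      Tendsto.const_mul_atTop' hc tendsto_id
    calc limsup (fun m => u (c * m)) atTop
        = limsup u (map (fun m : ℕ => c * m) atTop) := limsup_comp u _ _
      _ ≤ limsup u atTop := limsup_le_limsup_of_le hφ
  -- `≥` direction
  have hge : A * limsup u atTop ≤ limsup v atTop := by
    set L := limsup u atTop with hL
    -- key claim
    have key : ∀ b, b < L → A * b ≤ limsup v atTop := by
      intro b hb
      have hb_ne_top : b ≠ ⊤ := (lt_of_lt_of_le hb le_top).ne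
      refine le_of_forall_lt_imp_le_of_dense ?_
      intro w hw
      have hAb_ne_top : A * b ≠ ⊤ := ENNReal.mul_ne_top hA_ne_top hb_ne_top
      have hAb_ne_zero : A * b ≠ 0 := by
        intro h; rw [h] at hw; exact (not_lt_of_ge (zero_le : 0 ≤ w)) hw
      have hw_ne_top : w ≠ ⊤ := (hw.trans_le le_top).ne
      set β := (A * b).toReal with hβ
      have hβpos : 0 < β := ENNReal.toReal_pos hAb_ne_zero hAb_ne_top
      have hwR : w.toReal < β := (ENNReal.toReal_lt_toReal hw_ne_top hAb_ne_top).2 hw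
      set θ : ℝ := (w.toReal / β + 1) / 2 with hθdef
      have hq : w.toReal / β < 1 := (div_lt_one hβpos).2 hwR
      have hq0 : 0 ≤ w.toReal / β := by positivity
      have hθ1 : θ < 1 := by rw [hθdef]; linarith
      have hθ0 : 0 < θ := by rw [hθdef]; linarith
      have hwθ : w ≤ ENNReal.ofReal θ * (A * b) := by
        conv_lhs => rw [← ENNReal.ofReal_toReal hw_ne_top]
        rw [← ENNReal.ofReal_toReal hAb_ne_top, ← ENNReal.ofReal_mul hθ0.le]
        apply ENNReal.ofReal_le_ofReal
        have h1 : w.toReal / β ≤ θ := by rw [hθdef]; linarith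
        calc w.toReal = (w.toReal / β) * β := by field_simp
        _ ≤ θ * β := mul_le_mul_of_nonneg_right h1 hβpos.le
      have hfreq : ∃ᶠ m in atTop, b < u m :=
        frequently_lt_of_lt_limsup (by isBoundedDefault) hb
      set S : Set ℕ := {m | b < u m} with hSdef
      have hS : S.Infinite := by
        apply Set.infinite_of_forall_exists_gt
        intro a
        obtain ⟨m, hma, hmu⟩ := (frequently_atTop.1 hfreq) (a + 1)
        exact ⟨m, hmu, by omega⟩
      obtain ⟨ρ, hT⟩ := aux_pigeon hS hc
      set T := {m ∈ S | m % c = ρ} with hTdef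
      obtain ⟨ℓ1, hℓ1S, hℓ1ρ⟩ := hT.nonempty
      have hu1 : 0 < u ℓ1 := lt_of_le_of_lt (zero_le : 0 ≤ b) hℓ1S
      have hf1pos : 0 < f (ℓ1 * r) := by
        simp only [hu, ENNReal.ofReal_pos] at hu1
        have hb0 : (0:ℝ) ≤ (ℓ1:ℝ) ^ k := Real.rpow_nonneg (Nat.cast_nonneg _) k
        have hden : 0 < (ℓ1:ℝ) ^ k := by
          rcases hb0.lt_or_eq with h | h
          · exact h
          · rw [← h, div_zero] at hu1; exact absurd hu1 (lt_irrefl 0)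
        rcases div_pos_iff.1 hu1 with ⟨h, _⟩ | ⟨_, h⟩
        · exact h
        · exact absurd hden (not_lt.2 h.le)
      set X : ℝ := ((d * ℓ1 : ℕ) : ℝ) with hX
      have htend : Tendsto (fun ℓ : ℕ => ((ℓ:ℝ) / ((ℓ:ℝ) + X)) ^ k) atTop (nhds 1) := by
        have h1 := tendsto_natCast_div_add_atTop (𝕜 := ℝ) X
        have h2 := h1.rpow_const (p := k) (Or.inl one_ne_zero)
        rwa [Real.one_rpow] at h2
      have hev : ∀ᶠ ℓ : ℕ in atTop, θ ≤ ((ℓ:ℝ) / ((ℓ:ℝ) + X)) ^ k :=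
        htend.eventually (eventually_ge_nhds hθ1)
      obtain ⟨n0, hn0⟩ := eventually_atTop.1 hev
      refine le_trans hwθ (le_limsup_of_frequently_le ?_)
      rw [frequently_atTop]
      intro n
      obtain ⟨ℓ, hℓT, hℓgt⟩ := hT.exists_gt (max n0 (c * (n + 1)))
      obtain ⟨hℓS, hℓρ⟩ := hℓT
      have hℓn0 : n0 ≤ ℓ := le_trans (le_max_left _ _) hℓgt.le
      have hℓcn : c * (n + 1) ≤ ℓ := le_trans (le_max_right _ _) hℓgt.le
      have hℓ1' : 1 ≤ ℓ := le_trans (by nlinarith [hc]) hℓcn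
      set N := ℓ + d * ℓ1 with hN
      have hdvd : c ∣ N := by
        have h1 : ℓ ≡ ℓ1 [MOD c] := hℓρ.trans hℓ1ρ.symm
        have h2 : N ≡ ℓ1 + d * ℓ1 [MOD c] := h1.add_right _
        have h3 : ℓ1 + d * ℓ1 = c * ℓ1 := by rw [hcdef]; ring
        have h4 : N % c = (c * ℓ1) % c := by rw [← h3]; exact h2
        rw [Nat.mul_mod_right] at h4
        exact Nat.dvd_of_mod_eq_zero h4
      set m := N / c with hmdef
      have hcm : c * m = N := Nat.mul_div_cancel' hdvd
      have hmn : n + 1 ≤ m := by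
        have h5 : c * (n + 1) ≤ c * m := by rw [hcm]; omega
        exact Nat.le_of_mul_le_mul_left h5 hc
      refine ⟨m, by omega, ?_⟩
      have hfN : f (ℓ * r) ≤ f (N * r) := by
        have h := aux_iter f h_super hf1pos (ℓ * r) d
        rwa [show d * (ℓ1 * r) + ℓ * r = N * r by rw [hN]; ring] at h
      have hℓR : (0:ℝ) < (ℓ:ℝ) := by exact_mod_cast hℓ1'
      have hm1 : 1 ≤ m := by omega
      have hmR : (0:ℝ) < (m:ℝ) := by exact_mod_cast hm1
      have hNR : ((N:ℕ):ℝ) = (c:ℝ) * (m:ℝ) := by rw [← hcm]; push_cast; ring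
      have hθℓ : θ ≤ ((ℓ:ℝ) / ((ℓ:ℝ) + X)) ^ k := hn0 ℓ hℓn0
      have hbu : b ≤ u ℓ := le_of_lt hℓS
      have hreal : θ * ((c:ℝ) ^ k * (f (ℓ * r) / (ℓ:ℝ) ^ k)) ≤ f (N * r) / (m:ℝ) ^ k := by
        have hXN : (ℓ:ℝ) + X = (N:ℝ) := by rw [hN, hX]; push_cast; ring
        have hrk : ((ℓ:ℝ) / ((ℓ:ℝ) + X)) ^ k = (ℓ:ℝ) ^ k / ((c:ℝ) ^ k * (m:ℝ) ^ k) := by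
          rw [hXN, hNR, Real.div_rpow hℓR.le (by positivity),
            Real.mul_rpow (by positivity) hmR.le]
        rw [hrk] at hθℓ
        have hmk : (0:ℝ) < (m:ℝ) ^ k := Real.rpow_pos_of_pos hmR k
        have hℓk : (0:ℝ) < (ℓ:ℝ) ^ k := Real.rpow_pos_of_pos hℓR k
        have hfnn : (0:ℝ) ≤ f (ℓ * r) := h_nonneg _
        have h1 : θ * ((c:ℝ) ^ k * (f (ℓ * r) / (ℓ:ℝ) ^ k)) ≤
            ((ℓ:ℝ) ^ k / ((c:ℝ) ^ k * (m:ℝ) ^ k)) * ((c:ℝ) ^ k * (f (ℓ * r) / (ℓ:ℝ) ^ k)) :=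
          mul_le_mul_of_nonneg_right hθℓ
            (mul_nonneg hckpos.le (div_nonneg hfnn hℓk.le))
        have h2 : ((ℓ:ℝ) ^ k / ((c:ℝ) ^ k * (m:ℝ) ^ k)) * ((c:ℝ) ^ k * (f (ℓ * r) / (ℓ:ℝ) ^ k))
            = f (ℓ * r) / (m:ℝ) ^ k := by
          field_simp
        rw [h2] at h1
        refine h1.trans ?_
        gcongr
      have heq : ENNReal.ofReal θ * (A * u ℓ) =
          ENNReal.ofReal (θ * ((c:ℝ) ^ k * (f (ℓ * r) / (ℓ:ℝ) ^ k))) := by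
        simp only [hu, hAdef]
        rw [← ENNReal.ofReal_mul hckpos.le, ← ENNReal.ofReal_mul hθ0.le]
      have hvm : v m = ENNReal.ofReal (f (N * r) / (m:ℝ) ^ k) := by
        simp only [hv]
        rw [show m * (c * r) = N * r by rw [← hcm]; ring]
      calc ENNReal.ofReal θ * (A * b)
          ≤ ENNReal.ofReal θ * (A * u ℓ) := mul_le_mul_right (mul_le_mul_right hbu A) _
        _ = ENNReal.ofReal (θ * ((c:ℝ) ^ k * (f (ℓ * r) / (ℓ:ℝ) ^ k))) := heq
        _ ≤ ENNReal.ofReal (f (N * r) / (m:ℝ) ^ k) := ENNReal.ofReal_le_ofReal hreal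
        _ = v m := hvm.symm
    -- assemble
    refine le_of_forall_lt_imp_le_of_dense ?_
    intro z hz
    have hL0 : L ≠ 0 := by
      intro h; rw [h, mul_zero] at hz; exact (not_lt_of_ge (zero_le : 0 ≤ z)) hz
    have hb : A⁻¹ * z < L := by
      have : A⁻¹ * z < A⁻¹ * (A * L) := ENNReal.mul_right_strictMono
        (ENNReal.inv_ne_zero.2 hA_ne_top) (ENNReal.inv_ne_top.2 hA_ne_zero) hz
      rwa [← mul_assoc, ENNReal.inv_mul_cancel hA_ne_zero hA_ne_top, one_mul] at this
    have hz' : z = A * (A⁻¹ * z) := by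
      rw [← mul_assoc, ENNReal.mul_inv_cancel hA_ne_zero hA_ne_top, one_mul]
    rw [hz']
    exact key _ hb
  exact le_antisymm hle hge
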